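/- Assume γ₂ = 0 and γ₁ < 0. With p(t) := B(t) − A(t)²/3, q(t) := 2A(t)³/27 − A(t)B(t)/3 + C(t), and discriminant Δ(t) := (p(t)/3)³ + (q(t)/2)², one has t³·Δ(t) → −g³/27 as t → ∞; in particular Δ(t) < 0 for all sufficiently large t, so φ(t,·) has three distinct real roots Λ₃(t) < Λ₂(t) < Λ₁(t) for large t. Moreover there exists t₀ > 0 such that for all t ≥ t₀ one has γ₁d₁ < Λ₃(t) < Λ₂(t) < 0 < Λ₁(t), and Λᵢ(t) → 0 as t → ∞ for i = 1, 2, 3. -/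

import Mathlib

open Real Filter Asymptotics

lemma tendsto_exp_neg_mul (c : ℝ) (hc : 0 < c) :
    Tendsto (fun t : ℝ => Real.exp (-(t * c))) atTop (nhds 0) := by
  apply Real.tendsto_exp_atBot.comp
  exact tendsto_neg_atBot_iff.mpr (tendsto_id.atTop_mul_const hc)

lemma tanh_ratio (x : ℝ) :
    Real.tanh x = (1 - Real.exp (-(x * 2))) / (1 + Real.exp (-(x * 2))) := by
  have h2 : Real.exp (-(x * 2)) = Real.exp (-x) * Real.exp (-x) := by
    rw [← Real.exp_add]; ring_nf
  rw [Real.tanh_eq_sinh_div_cosh, Real.sinh_eq, Real.cosh_eq, h2, Real.exp_neg]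
  have h := Real.exp_pos x
  field_simp

lemma tendsto_tanh_mul (c : ℝ) (hc : 0 < c) :
    Tendsto (fun t : ℝ => Real.tanh (t * c)) atTop (nhds 1) := by
  have h : ∀ t : ℝ, Real.tanh (t * c) =
      (1 - Real.exp (-(t * (2 * c)))) / (1 + Real.exp (-(t * (2 * c)))) := by
    intro t
    rw [tanh_ratio]
    congr 2 <;> ring_nf
  simp only [h]
  have he := tendsto_exp_neg_mul (2 * c) (by linarith)
  have hne : (1:ℝ) + 0 ≠ 0 := by norm_num
  have h2 := (tendsto_const_nhds (x := (1:ℝ))).sub he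
  have h3 := h2.div ((tendsto_const_nhds (x := (1:ℝ))).add he) hne
  have e : ((1:ℝ) - 0) / (1 + 0) = 1 := by norm_num
  rw [e] at h3; exact h3

lemma ratio_eq (d₁ d₂ t : ℝ) :
    Real.sinh (t * d₁) * Real.cosh (t * d₂) / Real.cosh (t * (d₁ + d₂)) =
      (1 + Real.exp (-(t * (2 * d₂))) - Real.exp (-(t * (2 * d₁)))
        - Real.exp (-(t * (2 * (d₁ + d₂))))) /
      (2 * (1 + Real.exp (-(t * (2 * (d₁ + d₂)))))) := by
  have e1 : Real.exp (-(t * (2 * d₁))) = Real.exp (-(t * d₁)) * Real.exp (-(t * d₁)) := by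
    rw [← Real.exp_add]; ring_nf
  have e2 : Real.exp (-(t * (2 * d₂))) = Real.exp (-(t * d₂)) * Real.exp (-(t * d₂)) := by
    rw [← Real.exp_add]; ring_nf
  have e3 : Real.exp (t * (d₁ + d₂)) = Real.exp (t * d₁) * Real.exp (t * d₂) := by
    rw [← Real.exp_add]; ring_nf
  have e4 : Real.exp (-(t * (2 * (d₁ + d₂)))) =
      (Real.exp (-(t * d₁)) * Real.exp (-(t * d₂))) *
      (Real.exp (-(t * d₁)) * Real.exp (-(t * d₂))) := by
    rw [← Real.exp_add, ← Real.exp_add]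
    congr 1; ring
  have hc : 0 < Real.cosh (t * (d₁ + d₂)) := Real.cosh_pos _
  have hu := Real.exp_pos (t * d₁)
  have hv := Real.exp_pos (t * d₂)
  rw [Real.sinh_eq, Real.cosh_eq, Real.cosh_eq, e1, e2, e4, e3,
    Real.exp_neg (t * d₁), Real.exp_neg (t * d₂)]
  rw [Real.exp_neg, e3]
  field_simp
  ring

lemma tendsto_ratio (d₁ d₂ : ℝ) (h₁ : 0 < d₁) (h₂ : 0 < d₂) :
    Tendsto (fun t : ℝ => Real.sinh (t * d₁) * Real.cosh (t * d₂) /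
      Real.cosh (t * (d₁ + d₂))) atTop (nhds (1 / 2)) := by
  simp only [ratio_eq]
  have ha := tendsto_exp_neg_mul (2 * d₁) (by linarith)
  have hb := tendsto_exp_neg_mul (2 * d₂) (by linarith)
  have hd := tendsto_exp_neg_mul (2 * (d₁ + d₂)) (by linarith)
  have hne : (2:ℝ) * (1 + 0) ≠ 0 := by norm_num
  have h := (((tendsto_const_nhds (x := (1:ℝ))).add hb).sub ha |>.sub hd).div
    (((tendsto_const_nhds (x := (2:ℝ))).mul ((tendsto_const_nhds (x := (1:ℝ))).add hd))) hne
  have e : ((1:ℝ) + 0 - 0 - 0) / (2 * (1 + 0)) = 1 / 2 := by norm_num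
  rw [e] at h; exact h

lemma cubic_factor {A B C r b c : ℝ} (hrb : r ≠ b) (hrc : r ≠ c) (hbc : b ≠ c)
    (h1 : r ^ 3 + A * r ^ 2 + B * r + C = 0)
    (h2 : b ^ 3 + A * b ^ 2 + B * b + C = 0)
    (h3 : c ^ 3 + A * c ^ 2 + B * c + C = 0) :
    ∀ Λ : ℝ, Λ ^ 3 + A * Λ ^ 2 + B * Λ + C = (Λ - r) * (Λ - b) * (Λ - c) := by
  have e1 : (r - b) * (r ^ 2 + r * b + b ^ 2 + A * (r + b) + B) = 0 := by
    linear_combination h1 - h2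
  have e2 : (r - c) * (r ^ 2 + r * c + c ^ 2 + A * (r + c) + B) = 0 := by
    linear_combination h1 - h3
  have e3 : (b - c) * (b ^ 2 + b * c + c ^ 2 + A * (b + c) + B) = 0 := by
    linear_combination h2 - h3
  have E1 : r ^ 2 + r * b + b ^ 2 + A * (r + b) + B = 0 :=
    (mul_eq_zero.mp e1).resolve_left (sub_ne_zero.mpr hrb)
  have E2 : r ^ 2 + r * c + c ^ 2 + A * (r + c) + B = 0 :=
    (mul_eq_zero.mp e2).resolve_left (sub_ne_zero.mpr hrc)
  have E3 : b ^ 2 + b * c + c ^ 2 + A * (b + c) + B = 0 :=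
    (mul_eq_zero.mp e3).resolve_left (sub_ne_zero.mpr hbc)
  have e4 : (b - c) * (r + b + c + A) = 0 := by linear_combination E1 - E2
  have hA : A = -(r + b + c) := by
    have := (mul_eq_zero.mp e4).resolve_left (sub_ne_zero.mpr hbc); linarith
  have hB : B = r * b + r * c + b * c := by
    rw [hA] at E3; linear_combination E3
  have hC : C = -(r * b * c) := by
    rw [hA, hB] at h1; linear_combination h1
  intro Λ
  rw [hA, hB, hC]; ring

lemma tanh_le_one' (x : ℝ) : Real.tanh x ≤ 1 := by
  rw [Real.tanh_eq_sinh_div_cosh]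
  rw [div_le_one (Real.cosh_pos x)]
  nlinarith [Real.cosh_sub_sinh x, Real.exp_pos (-x)]

lemma tanh_pos' {x : ℝ} (hx : 0 < x) : 0 < Real.tanh x := by
  rw [Real.tanh_eq_sinh_div_cosh]
  exact div_pos (Real.sinh_pos_iff.mpr hx) (Real.cosh_pos x)

lemma tanh_lt_tanh' {x y : ℝ} (hxy : x < y) : Real.tanh x < Real.tanh y := by
  rw [Real.tanh_eq_sinh_div_cosh, Real.tanh_eq_sinh_div_cosh,
    div_lt_div_iff₀ (Real.cosh_pos x) (Real.cosh_pos y)]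
  have h := Real.sinh_pos_iff.mpr (sub_pos.mpr hxy)
  rw [Real.sinh_sub] at h
  linarith

/-- The coefficient `A(t)` of the dispersion cubic. -/
noncomputable def funA (d₁ d₂ γ₁ γ₂ t : ℝ) : ℝ :=
  -(1 / t) * (γ₂ * (t * d₂ + Real.sinh (t * d₂) * Real.cosh (t * d₁) / Real.cosh (t * (d₁ + d₂)))
    + γ₁ * Real.sinh (t * d₁) * Real.cosh (t * d₂) / Real.cosh (t * (d₁ + d₂)))

/-- The coefficient `B(t)` of the dispersion cubic. -/
noncomputable def funB (d₁ d₂ g γ₁ γ₂ t : ℝ) : ℝ :=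
  Real.tanh (t * (d₁ + d₂)) * ((γ₂ ^ 2 * d₂ - g) / t
    + γ₂ * (γ₁ - γ₂) * Real.sinh (t * d₁) * Real.sinh (t * d₂) /
        (t ^ 2 * Real.sinh (t * (d₁ + d₂))))

/-- The coefficient `C(t)` of the dispersion cubic. -/
noncomputable def funC (d₁ d₂ g γ₁ γ₂ t : ℝ) : ℝ :=
  (g * Real.tanh (t * (d₁ + d₂)) / t ^ 2) *
    ((γ₁ - γ₂) * Real.sinh (t * d₁) * Real.sinh (t * d₂) / Real.sinh (t * (d₁ + d₂))
      + γ₂ * d₂ * t)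

/-- The dispersion cubic `φ(t,Λ)`. -/
noncomputable def phi (d₁ d₂ g γ₁ γ₂ t Λ : ℝ) : ℝ :=
  Λ ^ 3 + funA d₁ d₂ γ₁ γ₂ t * Λ ^ 2 + funB d₁ d₂ g γ₁ γ₂ t * Λ + funC d₁ d₂ g γ₁ γ₂ t

/-- The coefficient `p(t)` of the depressed cubic. -/
noncomputable def funp (d₁ d₂ g γ₁ γ₂ t : ℝ) : ℝ :=
  funB d₁ d₂ g γ₁ γ₂ t - (funA d₁ d₂ γ₁ γ₂ t) ^ 2 / 3

/-- The coefficient `q(t)` of the depressed cubic. -/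
noncomputable def funq (d₁ d₂ g γ₁ γ₂ t : ℝ) : ℝ :=
  2 * (funA d₁ d₂ γ₁ γ₂ t) ^ 3 / 27 - funA d₁ d₂ γ₁ γ₂ t * funB d₁ d₂ g γ₁ γ₂ t / 3
    + funC d₁ d₂ g γ₁ γ₂ t

/-- The discriminant `Δ(t)` of the depressed cubic. -/
noncomputable def disc (d₁ d₂ g γ₁ γ₂ t : ℝ) : ℝ :=
  (funp d₁ d₂ g γ₁ γ₂ t / 3) ^ 3 + (funq d₁ d₂ g γ₁ γ₂ t / 2) ^ 2

set_option maxHeartbeats 2000000 in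
/-- the case `γ₂ = 0`, `γ₁ < 0`: `t³Δ(t) → −g³/27`, `Δ` is
eventually negative, and the dispersion cubic has three distinct real roots
with `γ₁d₁ < Λ₃ < Λ₂ < 0 < Λ₁`, all converging to `0`. -/
theorem discriminant_and_roots_gamma2_zero
    (d₁ d₂ g γ₁ : ℝ) (hd₁ : 0 < d₁) (hd₂ : 0 < d₂) (hg : 0 < g) (hγ₁ : γ₁ < 0) :
    Tendsto (fun t : ℝ => t ^ 3 * disc d₁ d₂ g γ₁ 0 t) atTop (nhds (-(g ^ 3) / 27)) ∧
    (∀ᶠ t in atTop, disc d₁ d₂ g γ₁ 0 t < 0) ∧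
    ∃ t₀ > (0 : ℝ), ∃ Λ₁ Λ₂ Λ₃ : ℝ → ℝ,
      (∀ t ≥ t₀,
        γ₁ * d₁ < Λ₃ t ∧ Λ₃ t < Λ₂ t ∧ Λ₂ t < 0 ∧ 0 < Λ₁ t ∧
        ∀ Λ : ℝ, phi d₁ d₂ g γ₁ 0 t Λ = (Λ - Λ₁ t) * (Λ - Λ₂ t) * (Λ - Λ₃ t)) ∧
      Tendsto Λ₁ atTop (nhds 0) ∧
      Tendsto Λ₂ atTop (nhds 0) ∧
      Tendsto Λ₃ atTop (nhds 0) := by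
  have hd : 0 < d₁ + d₂ := by linarith
  -- pointwise identities
  have hB : ∀ t : ℝ, funB d₁ d₂ g γ₁ 0 t = -(g * Real.tanh (t * (d₁ + d₂)) / t) := by
    intro t; simp [funB]; ring
  have hC : ∀ t : ℝ, 0 < t → funC d₁ d₂ g γ₁ 0 t =
      funA d₁ d₂ γ₁ 0 t * (-(g * Real.tanh (t * d₂) / t)) := by
    intro t ht
    have hs : Real.sinh (t * (d₁ + d₂)) ≠ 0 :=
      ne_of_gt (Real.sinh_pos_iff.mpr (by positivity))
    have hc1 : Real.cosh (t * (d₁ + d₂)) ≠ 0 := ne_of_gt (Real.cosh_pos _)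
    have hc2 : Real.cosh (t * d₂) ≠ 0 := ne_of_gt (Real.cosh_pos _)
    have ht' : t ≠ 0 := ne_of_gt ht
    simp only [funA, funC, Real.tanh_eq_sinh_div_cosh, zero_mul, zero_add, sub_zero, mul_zero,
      add_zero]
    field_simp
  -- limits of t·A, t·B, t²·C
  have hF : Tendsto (fun t : ℝ => t * funA d₁ d₂ γ₁ 0 t) atTop (nhds (-γ₁ / 2)) := by
    have hev : (fun t : ℝ => -γ₁ * (Real.sinh (t * d₁) * Real.cosh (t * d₂) /
        Real.cosh (t * (d₁ + d₂)))) =ᶠ[atTop] fun t => t * funA d₁ d₂ γ₁ 0 t := by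
      filter_upwards [eventually_gt_atTop (0:ℝ)] with t ht
      have ht' : t ≠ 0 := ne_of_gt ht
      simp only [funA, zero_mul, zero_add]
      field_simp
    have h := ((tendsto_ratio d₁ d₂ hd₁ hd₂).const_mul (-γ₁)).congr' hev
    convert h using 2; ring
  have hG : Tendsto (fun t : ℝ => t * funB d₁ d₂ g γ₁ 0 t) atTop (nhds (-g)) := by
    have hev : (fun t : ℝ => -(g * Real.tanh (t * (d₁ + d₂)))) =ᶠ[atTop]
        fun t => t * funB d₁ d₂ g γ₁ 0 t := by
      filter_upwards [eventually_gt_atTop (0:ℝ)] with t ht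
      rw [hB t]
      field_simp
    have h := (((tendsto_tanh_mul (d₁ + d₂) hd).const_mul g).neg).congr' hev
    convert h using 2; ring
  have hH : Tendsto (fun t : ℝ => t ^ 2 * funC d₁ d₂ g γ₁ 0 t) atTop (nhds (γ₁ * g / 2)) := by
    have hev : (fun t : ℝ => (t * funA d₁ d₂ γ₁ 0 t) * (-(g * Real.tanh (t * d₂)))) =ᶠ[atTop]
        fun t => t ^ 2 * funC d₁ d₂ g γ₁ 0 t := by
      filter_upwards [eventually_gt_atTop (0:ℝ)] with t ht
      rw [hC t ht]
      have ht' : t ≠ 0 := ne_of_gt ht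
      field_simp
    have h := (hF.mul (((tendsto_tanh_mul d₂ hd₂).const_mul g).neg)).congr' hev
    convert h using 2; ring
  have hinv : ∀ c : ℝ, 0 < c → Tendsto (fun t : ℝ => 1 / (c * t)) atTop (nhds 0) := by
    intro c hc
    exact tendsto_const_nhds.div_atTop (tendsto_id.const_mul_atTop hc)
  -- limit of t·p
  have hp : Tendsto (fun t : ℝ => t * funp d₁ d₂ g γ₁ 0 t) atTop (nhds (-g)) := by
    have hev : (fun t : ℝ => t * funB d₁ d₂ g γ₁ 0 t
        - (t * funA d₁ d₂ γ₁ 0 t) ^ 2 * (1 / (3 * t))) =ᶠ[atTop]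
        fun t => t * funp d₁ d₂ g γ₁ 0 t := by
      filter_upwards [eventually_gt_atTop (0:ℝ)] with t ht
      have ht' : t ≠ 0 := ne_of_gt ht
      simp only [funp]
      field_simp
    have h := (hG.sub ((hF.pow 2).mul (hinv 3 (by norm_num)))).congr' hev
    convert h using 2; ring
  -- limit of t²·q
  have hq : Tendsto (fun t : ℝ => t ^ 2 * funq d₁ d₂ g γ₁ 0 t) atTop (nhds (γ₁ * g / 3)) := by
    have hev : (fun t : ℝ => (t * funA d₁ d₂ γ₁ 0 t) ^ 3 * (1 / (27 * t)) * 2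
        - (t * funA d₁ d₂ γ₁ 0 t) * (t * funB d₁ d₂ g γ₁ 0 t) / 3
        + t ^ 2 * funC d₁ d₂ g γ₁ 0 t) =ᶠ[atTop]
        fun t => t ^ 2 * funq d₁ d₂ g γ₁ 0 t := by
      filter_upwards [eventually_gt_atTop (0:ℝ)] with t ht
      have ht' : t ≠ 0 := ne_of_gt ht
      simp only [funq]
      field_simp
    have h := (((((hF.pow 3).mul (hinv 27 (by norm_num))).mul_const 2).sub
      ((hF.mul hG).div_const 3)).add hH).congr' hev
    convert h using 2; ring
  -- main first limit
  have main1 : Tendsto (fun t : ℝ => t ^ 3 * disc d₁ d₂ g γ₁ 0 t) atTop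
      (nhds (-(g ^ 3) / 27)) := by
    have hev : (fun t : ℝ => (t * funp d₁ d₂ g γ₁ 0 t / 3) ^ 3
        + (t ^ 2 * funq d₁ d₂ g γ₁ 0 t) ^ 2 * (1 / (4 * t))) =ᶠ[atTop]
        fun t => t ^ 3 * disc d₁ d₂ g γ₁ 0 t := by
      filter_upwards [eventually_gt_atTop (0:ℝ)] with t ht
      have ht' : t ≠ 0 := ne_of_gt ht
      simp only [disc]
      field_simp
      ring
    have h := (((hp.div_const 3).pow 3).add ((hq.pow 2).mul (hinv 4 (by norm_num)))).congr' hev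
    convert h using 2; ring
  refine ⟨main1, ?_, ?_⟩
  · -- eventually negative
    have hneg : -(g ^ 3) / 27 < 0 := by
      have : (0:ℝ) < g ^ 3 := by positivity
      linarith
    have h2 := main1.eventually_lt_const hneg
    filter_upwards [h2, eventually_gt_atTop (0:ℝ)] with t h1 ht
    nlinarith [pow_pos ht 3]
  · -- roots
    -- the dispersion cubic in simplified form
    have hphi : ∀ t : ℝ, 0 < t → ∀ Λ : ℝ, phi d₁ d₂ g γ₁ 0 t Λ =
        Λ ^ 3 + funA d₁ d₂ γ₁ 0 t * Λ ^ 2 - (g * Real.tanh (t * (d₁ + d₂)) / t) * Λ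
          - funA d₁ d₂ γ₁ 0 t * (g * Real.tanh (t * d₂) / t) := by
      intro t ht Λ
      simp only [phi, hB t, hC t ht]
      ring
    have hsq0 : Tendsto (fun t : ℝ => Real.sqrt (g / t)) atTop (nhds 0) := by
      have h1 : Tendsto (fun t : ℝ => g / t) atTop (nhds 0) :=
        tendsto_const_nhds.div_atTop tendsto_id
      have h2 := (Real.continuous_sqrt.tendsto 0).comp h1
      rw [Real.sqrt_zero] at h2; exact h2
    -- the eventual condition
    have hcond : ∀ᶠ t : ℝ in atTop, 0 < t ∧ 1 / 2 < Real.tanh (t * (d₁ + d₂)) ∧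
        8 * γ₁ ^ 2 < 9 * (g * t) ∧ 2 * Real.sqrt (g / t) < -(γ₁ * d₁) := by
      have c1 := eventually_gt_atTop (0:ℝ)
      have c2 := (tendsto_tanh_mul (d₁ + d₂) hd).eventually_const_lt
        (by norm_num : (1:ℝ) / 2 < 1)
      have c3 : ∀ᶠ t : ℝ in atTop, 8 * γ₁ ^ 2 < 9 * (g * t) := by
        have h : Tendsto (fun t : ℝ => 9 * (g * t)) atTop atTop :=
          Tendsto.const_mul_atTop (by norm_num) (tendsto_id.const_mul_atTop hg)
        exact h.eventually_gt_atTop _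
      have c4 : ∀ᶠ t : ℝ in atTop, 2 * Real.sqrt (g / t) < -(γ₁ * d₁) := by
        have h0 : Tendsto (fun t : ℝ => 2 * Real.sqrt (g / t)) atTop (nhds 0) := by
          have := hsq0.const_mul 2
          simpa using this
        exact h0.eventually_lt_const (by nlinarith)
      filter_upwards [c1, c2, c3, c4] with t h1 h2 h3 h4
      exact ⟨h1, h2, h3, h4⟩
    -- construction of the roots for a fixed good t
    have hroots : ∀ t : ℝ, 0 < t → 1 / 2 < Real.tanh (t * (d₁ + d₂)) →
        8 * γ₁ ^ 2 < 9 * (g * t) → 2 * Real.sqrt (g / t) < -(γ₁ * d₁) →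
        ∃ r b c : ℝ, 0 < r ∧ r ≤ 2 * Real.sqrt (g / t) ∧ b < 0 ∧ -Real.sqrt (g / t) ≤ b ∧
          c < b ∧ γ₁ * d₁ < c ∧ -(2 * Real.sqrt (g / t)) ≤ c ∧
          ∀ Λ : ℝ, phi d₁ d₂ g γ₁ 0 t Λ = (Λ - r) * (Λ - b) * (Λ - c) := by
      intro t ht hT h9 h2s
      set A := funA d₁ d₂ γ₁ 0 t with hAdef
      set T : ℝ := Real.tanh (t * (d₁ + d₂)) with hTdef
      set T₂ : ℝ := Real.tanh (t * d₂) with hT₂def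
      set β : ℝ := g * T / t with hβdef
      set γc : ℝ := g * T₂ / t with hγcdef
      set s : ℝ := Real.sqrt β with hsdef
      have hT₂pos : 0 < T₂ := tanh_pos' (by positivity)
      have hT₂T : T₂ < T := tanh_lt_tanh' (by nlinarith)
      have hβpos : 0 < β := by
        have : 0 < T := by linarith
        positivity
      have hγcpos : 0 < γc := by positivity
      have hγclt : γc < β := by
        rw [hγcdef, hβdef, div_lt_div_iff₀ ht ht]
        nlinarith
      have hs2 : s ^ 2 = β := Real.sq_sqrt hβpos.le
      have hspos : 0 < s := Real.sqrt_pos.mpr hβpos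
      have hβle : β ≤ g / t := by
        rw [hβdef, div_le_div_iff₀ ht ht]
        nlinarith [tanh_le_one' (t * (d₁ + d₂))]
      have hsle : s ≤ Real.sqrt (g / t) := Real.sqrt_le_sqrt hβle
      -- positivity of A
      have hs₁pos : 0 < Real.sinh (t * d₁) := Real.sinh_pos_iff.mpr (by positivity)
      have hc₂pos : 0 < Real.cosh (t * d₂) := Real.cosh_pos _
      have hcpos : 0 < Real.cosh (t * (d₁ + d₂)) := Real.cosh_pos _
      have hAform : A = -(1 / t) * (γ₁ * Real.sinh (t * d₁) * Real.cosh (t * d₂) /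
          Real.cosh (t * (d₁ + d₂))) := by
        rw [hAdef]; simp only [funA, zero_mul, zero_add]
      have hApos : 0 < A := by
        rw [hAform]
        have h1 : γ₁ * Real.sinh (t * d₁) * Real.cosh (t * d₂) /
            Real.cosh (t * (d₁ + d₂)) < 0 :=
          div_neg_of_neg_of_pos (mul_neg_of_neg_of_pos (mul_neg_of_neg_of_pos hγ₁ hs₁pos) hc₂pos) hcpos
        nlinarith [mul_pos (one_div_pos.mpr ht) (neg_pos.mpr h1)]
      have hAle : A ≤ -γ₁ / t := by
        have hx : Real.sinh (t * d₁) ≤ Real.cosh (t * d₁) := by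
          nlinarith [Real.cosh_sub_sinh (t * d₁), Real.exp_pos (-(t * d₁))]
        have heq : t * (d₁ + d₂) = t * d₁ + t * d₂ := by ring
        have hy : Real.cosh (t * d₁) * Real.cosh (t * d₂) ≤ Real.cosh (t * (d₁ + d₂)) := by
          rw [heq, Real.cosh_add]
          nlinarith [Real.sinh_pos_iff.mpr (show (0:ℝ) < t * d₁ by positivity),
            Real.sinh_pos_iff.mpr (show (0:ℝ) < t * d₂ by positivity)]
        have hr1 : Real.sinh (t * d₁) * Real.cosh (t * d₂) /
            Real.cosh (t * (d₁ + d₂)) ≤ 1 := by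
          rw [div_le_one hcpos]
          nlinarith
        have hpos : 0 < -γ₁ / t := div_pos (by linarith) ht
        have hrw : A = (-γ₁ / t) * (Real.sinh (t * d₁) * Real.cosh (t * d₂) /
            Real.cosh (t * (d₁ + d₂))) := by
          rw [hAform]; ring
        rw [hrw]
        nlinarith [mul_le_mul_of_nonneg_left hr1 hpos.le]
      -- key inequality 2A < 3s
      have h3s2A : 2 * A < 3 * s := by
        have h1 : (2 * A) ^ 2 ≤ 4 * γ₁ ^ 2 / t ^ 2 := by
          have h2 : A ≤ -γ₁ / t := hAle
          have : (2 * A) ^ 2 ≤ (2 * (-γ₁ / t)) ^ 2 := by nlinarith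
          calc (2 * A) ^ 2 ≤ (2 * (-γ₁ / t)) ^ 2 := this
            _ = 4 * γ₁ ^ 2 / t ^ 2 := by ring
        have hβgt : g / (2 * t) < β := by
          rw [hβdef, div_lt_div_iff₀ (by positivity) ht]
          nlinarith
        have h2 : 4 * γ₁ ^ 2 / t ^ 2 < 9 * β := by
          have h2a : 4 * γ₁ ^ 2 / t ^ 2 < 9 * (g / (2 * t)) := by
            rw [div_lt_iff₀ (by positivity)]
            have e : 9 * (g / (2 * t)) * t ^ 2 = 9 * g * t / 2 := by
              field_simp
            rw [e]
            linarith
          nlinarith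
        have h3 : (2 * A) ^ 2 < (3 * s) ^ 2 := by
          have : (3 * s) ^ 2 = 9 * β := by rw [← hs2]; ring
          rw [this]
          nlinarith
        exact lt_of_pow_lt_pow_left₀ 2 (by positivity) h3
      -- the simplified cubic and its values
      have hphit : ∀ Λ : ℝ, phi d₁ d₂ g γ₁ 0 t Λ =
          Λ ^ 3 + A * Λ ^ 2 - β * Λ - A * γc := by
        intro Λ
        rw [hphi t ht Λ]
      have contφ : Continuous (fun Λ : ℝ => phi d₁ d₂ g γ₁ 0 t Λ) := by
        unfold phi; fun_prop
      have v1 : phi d₁ d₂ g γ₁ 0 t (-(2 * s)) < 0 := by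
        rw [hphit]
        have hβs : 0 < β * s := mul_pos hβpos hspos
        nlinarith [mul_pos hApos hγcpos, mul_lt_mul_of_pos_right h3s2A hβpos]
      have v2 : 0 < phi d₁ d₂ g γ₁ 0 t (-s) := by
        rw [hphit]
        nlinarith [mul_pos hApos (sub_pos.mpr hγclt)]
      have v3 : phi d₁ d₂ g γ₁ 0 t 0 < 0 := by
        rw [hphit]
        nlinarith [mul_pos hApos hγcpos]
      have v4 : 0 < phi d₁ d₂ g γ₁ 0 t (2 * s) := by
        rw [hphit]
        nlinarith [mul_pos hβpos hspos, mul_pos hApos hβpos,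
          mul_lt_mul_of_pos_left hγclt hApos]
      -- the three roots by the intermediate value theorem
      obtain ⟨c, hcI, hc0⟩ := intermediate_value_Ioo (by linarith : -(2*s) ≤ -s)
        contφ.continuousOn ⟨v1, v2⟩
      obtain ⟨b, hbI, hb0⟩ := intermediate_value_Ioo' (by linarith : -s ≤ (0:ℝ))
        contφ.continuousOn ⟨v3, v2⟩
      obtain ⟨r, hrI, hr0⟩ := intermediate_value_Ioo (by linarith : (0:ℝ) ≤ 2*s)
        contφ.continuousOn ⟨v3, v4⟩
      obtain ⟨hc1, hc2⟩ := hcI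
      obtain ⟨hb1, hb2⟩ := hbI
      obtain ⟨hr1, hr2⟩ := hrI
      refine ⟨r, b, c, hr1, by linarith, hb2, by linarith, by linarith, by nlinarith,
        by linarith, ?_⟩
      have hfact := cubic_factor (A := funA d₁ d₂ γ₁ 0 t) (B := funB d₁ d₂ g γ₁ 0 t)
        (C := funC d₁ d₂ g γ₁ 0 t) (r := r) (b := b) (c := c)
        (by intro h; rw [h] at hr1; linarith)
        (by intro h; rw [h] at hr1; linarith)
        (by intro h; rw [h] at hb1; linarith)
        (by simpa [phi] using hr0) (by simpa [phi] using hb0) (by simpa [phi] using hc0)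
      intro Λ
      simpa [phi] using hfact Λ
    -- choose the threshold
    obtain ⟨t₁, ht₁⟩ := eventually_atTop.mp hcond
    set t₀ : ℝ := max t₁ 1 with ht₀def
    have ht₀pos : (0:ℝ) < t₀ := lt_of_lt_of_le one_pos (le_max_right _ _)
    have hsel : ∀ t : ℝ, ∃ x : ℝ × ℝ × ℝ, t₀ ≤ t →
        (0 < x.1 ∧ x.1 ≤ 2 * Real.sqrt (g / t) ∧ x.2.1 < 0 ∧
          -Real.sqrt (g / t) ≤ x.2.1 ∧ x.2.2 < x.2.1 ∧ γ₁ * d₁ < x.2.2 ∧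
          -(2 * Real.sqrt (g / t)) ≤ x.2.2 ∧
          ∀ Λ : ℝ, phi d₁ d₂ g γ₁ 0 t Λ = (Λ - x.1) * (Λ - x.2.1) * (Λ - x.2.2)) := by
      intro t
      by_cases ht : t₀ ≤ t
      · have hc := ht₁ t (le_trans (le_max_left _ _) ht)
        obtain ⟨r, b, c, h1, h2, h3, h4, h5, h6, h7, h8⟩ :=
          hroots t hc.1 hc.2.1 hc.2.2.1 hc.2.2.2
        exact ⟨(r, b, c), fun _ => ⟨h1, h2, h3, h4, h5, h6, h7, h8⟩⟩
      · exact ⟨(0, 0, 0), fun h => absurd h ht⟩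
    choose f hf using hsel
    refine ⟨t₀, ht₀pos, fun t => (f t).1, fun t => (f t).2.1, fun t => (f t).2.2, ?_, ?_, ?_, ?_⟩
    · intro t ht
      obtain ⟨h1, h2, h3, h4, h5, h6, h7, h8⟩ := hf t ht
      exact ⟨h6, h5, h3, h1, h8⟩
    · -- Λ₁ → 0
      apply squeeze_zero_norm' (a := fun t => 2 * Real.sqrt (g / t))
      · filter_upwards [eventually_ge_atTop t₀] with t ht
        obtain ⟨h1, h2, _⟩ := hf t ht
        rw [Real.norm_eq_abs, abs_of_pos h1]
        exact h2
      · have := hsq0.const_mul 2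
        simpa using this
    · -- Λ₂ → 0
      apply squeeze_zero_norm' (a := fun t => 2 * Real.sqrt (g / t))
      · filter_upwards [eventually_ge_atTop t₀] with t ht
        obtain ⟨h1, h2, h3, h4, _⟩ := hf t ht
        rw [Real.norm_eq_abs, abs_of_neg h3]
        have hnn : 0 ≤ Real.sqrt (g / t) := Real.sqrt_nonneg _
        linarith
      · have := hsq0.const_mul 2
        simpa using this
    · -- Λ₃ → 0
      apply squeeze_zero_norm' (a := fun t => 2 * Real.sqrt (g / t))
      · filter_upwards [eventually_ge_atTop t₀] with t ht
        obtain ⟨h1, h2, h3, h4, h5, h6, h7, _⟩ := hf t ht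
        rw [Real.norm_eq_abs, abs_of_neg (by linarith : (f t).2.2 < 0)]
        linarith
      · have := hsq0.const_mul 2
        simpa using this
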